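/- Pósa's theorem: let G be a finite simple graph on p ≥ 3 vertices such that for every natural number j with 1 ≤ j < p/2, the number of vertices of degree at most j is less than j. Then G is Hamiltonian. -/

import Mathlib

open SimpleGraph List Finset

set_option linter.unusedSectionVars false
set_option maxHeartbeats 1000000

section PosaAux

variable {V : Type*} [DecidableEq V] [Fintype V]

section Lists
variable {α : Type*}


/-- If a list is a chain for `R'` but not for `R`, some consecutive pair satisfies `R'` not `R`. -/
lemma chain'_decomp {R R' : α → α → Prop} : ∀ {l : List α}, Chain' R' l → ¬ Chain' R l →
    ∃ (A : List α) (x y : α) (B : List α), l = A ++ x :: y :: B ∧ R' x y ∧ ¬ R x y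
  | [], _, h => absurd List.IsChain.nil h
  | [_], _, h => absurd (isChain_singleton _) h
  | x :: y :: t, h', h => by
    replace h' : IsChain R' (x :: y :: t) := h'
    rw [isChain_cons_cons] at h'
    by_cases hxy : R x y
    · have ht : ¬ Chain' R (y :: t) := fun hc => h (isChain_cons_cons.2 ⟨hxy, hc⟩)
      obtain ⟨A, p, q, B, heq, h1, h2⟩ := chain'_decomp h'.2 ht
      exact ⟨x :: A, p, q, B, by rw [heq]; simp, h1, h2⟩
    · exact ⟨[], x, y, t, rfl, h'.1, hxy⟩

/-- Upgrade a chain along `R'` to a chain along `R` when the only possible bad pair is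
the (last, head) pair, which cannot occur consecutively in a nodup list of length ≥ 3. -/
lemma chain_upgrade {R R' : α → α → Prop} {Q : List α} {x y : α}
    (hch : Chain' R' Q) (hnd : Q.Nodup) (hlen : 3 ≤ Q.length)
    (hhead : Q.head? = some y) (hlast : Q.getLast? = some x)
    (himp : ∀ p q, R' p q → ¬ R p q → (p = x ∧ q = y) ∨ (p = y ∧ q = x)) :
    Chain' R Q := by
  by_contra hc
  obtain ⟨A, p, q, B, heq, h1, h2⟩ := chain'_decomp hch hc
  rcases himp p q h1 h2 with ⟨hp, hq⟩ | ⟨hp, hq⟩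
  · -- p = x = getLast, but p has a successor
    rw [hp, hq] at heq
    rw [heq] at hnd hlast
    have hx : x ∈ y :: B := by
      apply List.mem_of_getLast? (l := y :: B)
      rw [List.getLast?_append, List.getLast?_cons_cons] at hlast
      cases hyB : (y :: B).getLast? with
      | none => simp [List.getLast?_eq_none_iff] at hyB
      | some z => rw [hyB] at hlast; simpa using hlast
    have h3 := (List.nodup_append.1 hnd).2.1
    rw [List.nodup_cons] at h3
    exact h3.1 hx
  · rw [hp, hq] at heq
    rw [heq] at hnd hhead hlast hlen
    cases A with
    | cons a A' =>
      simp only [List.cons_append, List.head?_cons, Option.some.injEq] at hhead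
      rw [List.cons_append, List.nodup_cons] at hnd
      exact hnd.1 (by rw [hhead]; simp)
    | nil =>
      simp only [List.nil_append] at hnd hlast hlen
      cases B with
      | nil => simp at hlen
      | cons b B' =>
        have hx : x ∈ b :: B' := by
          apply List.mem_of_getLast? (l := b :: B')
          rw [List.getLast?_cons_cons, List.getLast?_cons_cons] at hlast
          exact hlast
        rw [List.nodup_cons, List.nodup_cons] at hnd
        exact hnd.2.1 hx

end Lists



/-- Build a walk from a chain of adjacencies. -/
def toWalk (G : SimpleGraph V) : ∀ (u v : V) (l : List V), List.Chain G.Adj u (l ++ [v]) → G.Walk u v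
  | u, v, [], h => Walk.cons (List.isChain_cons_cons.1 (show List.IsChain G.Adj [u, v] from h)).1 Walk.nil
  | u, v, x :: xs, h => by
      rw [List.cons_append] at h
      have h2 : List.IsChain G.Adj (u :: x :: (xs ++ [v])) := h
      rw [List.isChain_cons_cons] at h2
      exact Walk.cons h2.1 (toWalk G x v xs h2.2)

lemma toWalk_support (G : SimpleGraph V) (u v : V) (l : List V) (h : List.Chain G.Adj u (l ++ [v])) :
    (toWalk G u v l h).support = u :: (l ++ [v]) := by
  induction l generalizing u with
  | nil => simp [toWalk]
  | cons x xs ih => simp [toWalk]; exact ih _ _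

lemma edge_start_end_not_mem (G : SimpleGraph V) {x a : V} (w : G.Walk x a) (hw : w.IsPath)
    (hlen : 2 ≤ w.length) : s(x, a) ∉ w.edges := by
  intro hmem
  cases w with
  | nil => simp at hlen
  | cons h1 w' =>
    rename_i x₁
    rw [Walk.cons_isPath_iff] at hw
    simp only [Walk.edges_cons, List.mem_cons] at hmem
    rcases hmem with heq | hmem
    · rw [Sym2.eq_iff] at heq
      rcases heq with ⟨h1', h2'⟩ | ⟨h1', h2'⟩
      · subst h2'
        rw [Walk.isPath_iff_eq_nil] at hw
        rw [hw.1] at hlen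
        simp [Walk.length_cons] at hlen
      · subst h1'
        exact hw.2 w'.start_mem_support
    · exact hw.2 (Walk.fst_mem_support_of_mem_edges w' hmem)


lemma length_eq_card {c : List V} (hnd : c.Nodup) (hall : ∀ x, x ∈ c) :
    c.length = Fintype.card V := by
  have h1 : c.toFinset = Finset.univ := Finset.eq_univ_iff_forall.2 (by simp [hall])
  have h2 := List.toFinset_card_of_nodup hnd
  rw [h1] at h2
  simpa using h2.symm

lemma isHamiltonian_of_list (G : SimpleGraph V) (hp : 3 ≤ Fintype.card V) (c : List V)
    (hnd : c.Nodup) (hall : ∀ x, x ∈ c) (hch : c.Chain' G.Adj)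
    (hcl : ∀ x ∈ c.getLast?, ∀ y ∈ c.head?, G.Adj x y) : G.IsHamiltonian := by
  have hlen : c.length = Fintype.card V := length_eq_card hnd hall
  match c, hnd, hall, hch, hcl, hlen with
  | [], _, _, _, _, hlen => simp at hlen; omega
  | [a], _, _, _, _, hlen => simp at hlen; omega
  | a :: x :: m, hnd, hall, hch, hcl, hlen =>
    have hne : x :: m ≠ [] := by simp
    have hbmem : (x :: m).getLast hne ∈ x :: m := List.getLast_mem hne
    have hdec : x :: m = (x :: m).dropLast ++ [(x :: m).getLast hne] :=
      (List.dropLast_append_getLast hne).symm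
    have hch' : List.Chain G.Adj a ((x :: m).dropLast ++ [(x :: m).getLast hne]) := by
      rw [← hdec]; exact hch
    set b := (x :: m).getLast hne with hb
    set w := toWalk G a b (x :: m).dropLast hch' with hw
    have hsupp : w.support = a :: (x :: m) := by
      rw [hw, toWalk_support, ← hdec]
    have hpath : w.IsPath := by
      rw [Walk.isPath_def, hsupp]; exact hnd
    have hadj : G.Adj b a := by
      apply hcl
      · rw [List.getLast?_eq_getLast (by simp : a :: x :: m ≠ [])]
        simp only [Option.mem_def, Option.some.injEq]
        rw [List.getLast_cons hne]
      · simp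
    have hlen2 : 2 ≤ w.length := by
      have h3 := Walk.length_support w
      rw [hsupp] at h3
      simp only [List.length_cons] at h3
      simp only [List.length_cons] at hlen
      omega
    have hedge : s(a, b) ∉ w.edges := edge_start_end_not_mem G w hpath hlen2
    have hcyc : (Walk.cons hadj w).IsCycle := by
      rw [Walk.cons_isCycle_iff]
      refine ⟨hpath, ?_⟩
      rwa [Sym2.eq_swap] at hedge
    intro _
    refine ⟨b, Walk.cons hadj w, hcyc, ?_⟩
    intro y
    have htail : (Walk.cons hadj w).tail.support = (Walk.cons hadj w).support.tail := by
      apply Walk.support_tail_of_not_nil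
      exact Walk.not_nil_cons
    rw [htail, Walk.support_cons, List.tail_cons, hsupp]
    exact List.count_eq_one_of_mem hnd (by exact hall y)

lemma list_of_isHamiltonian (G : SimpleGraph V) (hG : G.IsHamiltonian)
    (hnodd : 3 ≤ Fintype.card V) :
    ∃ c : List V, c.Nodup ∧ (∀ x, x ∈ c) ∧ c.Chain' G.Adj ∧
      (∀ x ∈ c.getLast?, ∀ y ∈ c.head?, G.Adj x y) := by
  obtain ⟨a, p, hp⟩ := hG (by omega)
  have hnn : ¬ p.Nil := hp.isCycle.not_nil
  have htail : p.tail.support = p.support.tail := Walk.support_tail_of_not_nil p hnn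
  have hcount : ∀ y, p.support.tail.count y = 1 := by
    intro y; rw [← htail]; exact hp.isHamiltonian_tail y
  have hndt : p.support.tail.Nodup := hp.isCycle.2
  have hallt : ∀ y, y ∈ p.support.tail := by
    intro y; rw [← List.count_pos_iff, hcount]; omega
  have htne : p.support.tail ≠ [] := by
    intro h; have := hallt a; rw [h] at this; simp at this
  have hlast : p.support.tail.getLast htne = a := by
    rw [List.getLast_tail]
    exact Walk.getLast_support p
  have hdec : p.support.tail = p.support.tail.dropLast ++ [a] := by
    conv_lhs => rw [← List.dropLast_append_getLast htne, hlast]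
  refine ⟨a :: p.support.tail.dropLast, ?_, ?_, ?_, ?_⟩
  · rw [List.nodup_cons]
    constructor
    · intro hmem
      have hnd2 := hndt
      rw [hdec, List.nodup_append] at hnd2
      exact hnd2.2.2 a hmem a (by simp) rfl
    · exact hndt.sublist (List.dropLast_sublist _)
  · intro y
    have hy := hallt y
    rw [hdec] at hy
    simp only [List.mem_append, List.mem_singleton] at hy
    rcases hy with h | h
    · exact List.mem_cons_of_mem _ h
    · simp [h]
  · have hsupp : p.support = a :: p.support.tail := by
      rw [← Walk.support_eq_cons]
    have hchain : List.Chain' G.Adj p.support := Walk.isChain_adj_support p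
    rw [hsupp, hdec, ← List.cons_append] at hchain
    exact (List.isChain_append.1 hchain).1
  · have hsupp : p.support = a :: p.support.tail := by
      rw [← Walk.support_eq_cons]
    have hchain : List.Chain' G.Adj p.support := Walk.isChain_adj_support p
    rw [hsupp, hdec, ← List.cons_append] at hchain
    have hj := (List.isChain_append.1 hchain).2.2
    intro x hx y hy
    simp only [List.head?_cons, Option.mem_def, Option.some.injEq] at hy
    subst hy
    exact hj x hx a (by simp)




lemma getLast?_append_ne {A B : List V} (h : B ≠ []) : (A ++ B).getLast? = B.getLast? := by
  rw [List.getLast?_append]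
  cases hB : B.getLast? with
  | none => simp [List.getLast?_eq_none_iff] at hB; exact absurd hB h
  | some z => rfl

lemma surgery (H : SimpleGraph V) (hp : 3 ≤ Fintype.card V) {u v : V}
    (hne : u ≠ v) (hnadj : ¬ H.Adj u v) (hH : ¬ H.IsHamiltonian)
    (hH' : (H ⊔ SimpleGraph.edge u v).IsHamiltonian) :
    ∃ (P : List V) (x y : V), ((x = u ∧ y = v) ∨ (x = v ∧ y = u)) ∧ P.Nodup ∧
      (∀ w, w ∈ P) ∧ Chain' H.Adj P ∧ P.head? = some y ∧ P.getLast? = some x := by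
  set H' := H ⊔ SimpleGraph.edge u v with hH'def
  have himp : ∀ p q, H'.Adj p q → ¬ H.Adj p q → (p = u ∧ q = v) ∨ (p = v ∧ q = u) := by
    intro p q h1 h2
    rw [hH'def, SimpleGraph.sup_adj, SimpleGraph.edge_adj] at h1
    tauto
  obtain ⟨c, hnd, hall, hch, hcl⟩ := list_of_isHamiltonian H' hH' hp
  have hclen : c.length = Fintype.card V := length_eq_card hnd hall
  have hcne : c ≠ [] := by intro h; rw [h] at hclen; simp at hclen; omega
  obtain ⟨a, c', rfl⟩ := List.exists_cons_of_ne_nil hcne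
  set c := a :: c' with hcdef
  have hheadc : c.head? = some a := rfl
  -- the closed chain r
  have hchr : Chain' H'.Adj (c ++ [a]) := by
    apply List.isChain_append.2
    refine ⟨hch, List.isChain_singleton a, ?_⟩
    intro x hx y hy
    simp only [List.head?_cons, Option.mem_def, Option.some.injEq] at hy
    subst hy
    exact hcl x hx a rfl
  by_cases hgood : Chain' H.Adj (c ++ [a])
  · exfalso
    apply hH
    apply isHamiltonian_of_list H hp c hnd hall
    · exact List.IsChain.prefix hgood ⟨[a], rfl⟩
    · intro x hx y hy
      rw [hheadc] at hy
      simp only [Option.mem_def, Option.some.injEq] at hy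
      subst hy
      have := (List.isChain_append.1 hgood).2.2
      exact this x hx a (by simp)
  · obtain ⟨A, x, y, B, heq, h1, h2⟩ := chain'_decomp hchr hgood
    have hxyuv := himp x y h1 h2
    have hxy : x ≠ y := by rcases hxyuv with ⟨rfl, rfl⟩ | ⟨rfl, rfl⟩ <;> [exact hne; exact hne.symm]
    have himp2 : ∀ p q, H'.Adj p q → ¬ H.Adj p q → (p = x ∧ q = y) ∨ (p = y ∧ q = x) := by
      intro p q hp1 hp2
      have := himp p q hp1 hp2
      rcases hxyuv with ⟨rfl, rfl⟩ | ⟨rfl, rfl⟩ <;> tauto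
    rcases List.eq_nil_or_concat B with rfl | ⟨B', e, rfl⟩
    · -- bad edge is the closing edge : c = A ++ [x], a = y
      have heq2 : c ++ [a] = (A ++ [x]) ++ [y] := by rw [heq]; simp
      obtain ⟨hc1, hc2⟩ := List.append_inj' heq2 (by simp)
      have ha : a = y := by simpa using hc2
      have hlastc : c.getLast? = some x := by rw [hc1]; exact List.getLast?_concat
      refine ⟨c, x, y, hxyuv, hnd, hall, ?_, by rw [hheadc, ha], hlastc⟩
      apply chain_upgrade hch hnd (by omega)
      · rw [hheadc, ha]
      · exact hlastc
      · exact himp2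
    · -- interior bad edge : c = A ++ x :: y :: B', a = e
      have heq2 : c ++ [a] = (A ++ x :: y :: B') ++ [e] := by rw [heq]; simp
      obtain ⟨hc1, hc2⟩ := List.append_inj' heq2 (by simp)
      have ha : a = e := by simpa using hc2
      subst ha
      set P : List V := (y :: B') ++ (A ++ [x]) with hPdef
      have hperm : c.Perm P := by
        rw [hc1, hPdef]
        calc A ++ x :: y :: B' = A ++ (x :: (y :: B')) := rfl
          _ ~ (x :: (y :: B')) ++ A := List.perm_append_comm
          _ = x :: ((y :: B') ++ A) := rfl
          _ ~ ((y :: B') ++ A) ++ [x] := (List.perm_append_singleton _ _).symm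
          _ = (y :: B') ++ (A ++ [x]) := by simp
      have hndP : P.Nodup := hperm.nodup_iff.1 hnd
      have hallP : ∀ w, w ∈ P := fun w => hperm.mem_iff.1 (hall w)
      have hlenP : P.length = c.length := hperm.length_eq.symm
      have hheadP : P.head? = some y := rfl
      have hlastP : P.getLast? = some x := by
        rw [hPdef, getLast?_append_ne (by simp), getLast?_append_ne (by simp)]
        simp
      -- head? (A ++ [x]) = some a
      have hheadAx : (A ++ [x]).head? = some a := by
        have : c.head? = (A ++ [x]).head? := by
          rw [hc1, List.head?_append, List.head?_append]
          simp
        rw [← this, hheadc]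
      have hchP : Chain' H'.Adj P := by
        rw [hPdef]; apply List.isChain_append.2
        refine ⟨?_, ?_, ?_⟩
        · exact List.IsChain.suffix hch ⟨A ++ [x], by rw [hc1]; simp⟩
        · exact List.IsChain.prefix hch ⟨y :: B', by rw [hc1]; simp⟩
        · intro p hp q hq
          rw [hheadAx] at hq
          simp only [Option.mem_def, Option.some.injEq] at hq
          subst hq
          -- p = getLast (y::B') = getLast c ; closing edge of r
          have hgl : c.getLast? = (y :: B').getLast? := by
            rw [hc1, show A ++ x :: y :: B' = (A ++ [x]) ++ (y :: B') by simp,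
              getLast?_append_ne (by simp)]
          have := (List.isChain_append.1 hchr).2.2
          apply this
          · rw [hgl]; exact hp
          · simp
      refine ⟨P, x, y, hxyuv, hndP, hallP, ?_, hheadP, hlastP⟩
      apply chain_upgrade hchP hndP (by omega) hheadP hlastP himp2




lemma path_bound (H : SimpleGraph V) [DecidableRel H.Adj] (hp : 3 ≤ Fintype.card V)
    (hH : ¬ H.IsHamiltonian) (P : List V) (a b : V) (hnd : P.Nodup) (hall : ∀ w, w ∈ P)
    (hch : Chain' H.Adj P) (hhead : P.head? = some a) (hlast : P.getLast? = some b) :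
    ∃ A : Finset V, A.card = H.degree a ∧ ∀ x ∈ A, ¬ H.Adj x b ∧ x ≠ b := by
  have hlen : P.length = Fintype.card V := length_eq_card hnd hall
  have hPne : P ≠ [] := by intro h; rw [h] at hlen; simp at hlen; omega
  have hn3 : 3 ≤ P.length := by omega
  have h0 : P[0]'(by omega) = a := by
    rw [List.getElem_zero, ← Option.some_inj, ← List.head?_eq_head hPne, hhead]
  have hb : P[P.length - 1]'(by omega) = b := by
    rw [← List.getLast_eq_getElem hPne, ← Option.some_inj, ← List.getLast?_eq_getLast hPne,
      hlast]
  -- index of a neighbor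
  have hidx : ∀ w ∈ H.neighborFinset a, 1 ≤ P.idxOf w ∧ P.idxOf w < P.length := by
    intro w hw
    rw [SimpleGraph.mem_neighborFinset] at hw
    have hmem : w ∈ P := hall w
    have hlt : P.idxOf w < P.length := List.idxOf_lt_length_iff.2 hmem
    refine ⟨?_, hlt⟩
    by_contra hj
    have hz : P.idxOf w = 0 := by omega
    have hgw : P[P.idxOf w]'hlt = w := List.getElem_idxOf hlt
    have : a = w := by rw [← h0, ← hgw]; congr 1; omega
    exact hw.ne this
  set f : V → V := fun w => P.getD (P.idxOf w - 1) a with hf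
  have hfval : ∀ w, ∀ hw : w ∈ H.neighborFinset a, f w = P[P.idxOf w - 1]'(by
      have := hidx w hw; omega) := by
    intro w hw
    rw [hf]
    exact List.getD_eq_getElem P a _
  -- the crossing argument: if P[j-1] is adjacent to b for a neighbor w = P[j] of a,
  -- we obtain a Hamiltonian cycle.
  have hcross : ∀ w ∈ H.neighborFinset a, ¬ H.Adj (f w) b := by
    intro w hw hadj
    obtain ⟨hj1, hjn⟩ := hidx w hw
    set j := P.idxOf w with hj
    rw [hfval w hw] at hadj
    have hgw : P[j]'hjn = w := List.getElem_idxOf hjn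
    rw [SimpleGraph.mem_neighborFinset] at hw
    apply hH
    set C : List V := P.take j ++ (P.drop j).reverse with hC
    have hdne : P.drop j ≠ [] := by
      intro h
      have : (P.drop j).length = P.length - j := List.length_drop
      rw [h] at this
      simp at this; omega
    have htne : P.take j ≠ [] := by
      intro h
      have : (P.take j).length = min j P.length := List.length_take
      rw [h] at this
      simp at this; omega
    have hperm : C.Perm P := by
      rw [hC]
      calc P.take j ++ (P.drop j).reverse
          ~ P.take j ++ P.drop j := List.Perm.append_left _ (List.reverse_perm _)
        _ = P := List.take_append_drop j P
    apply isHamiltonian_of_list H hp C (hperm.nodup_iff.2 hnd)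
      (fun z => hperm.mem_iff.2 (hall z))
    · -- Chain'
      rw [hC]; apply List.isChain_append.2
      refine ⟨List.IsChain.prefix hch (List.take_prefix j P), ?_, ?_⟩
      · rw [List.isChain_reverse]; change List.IsChain (flip H.Adj) _
        have hflip : (flip H.Adj) = H.Adj := by
          ext p q; exact ⟨fun h => h.symm, fun h => h.symm⟩
        rw [hflip]
        exact List.IsChain.suffix hch (List.drop_suffix j P)
      · intro p hp' q hq'
        -- p = P[j-1], q = b
        have hpl : (P.take j).getLast? = some (P[j-1]'(by omega)) := by
          rw [List.getLast?_eq_getLast htne, List.getLast_eq_getElem]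
          simp only [Option.some.injEq]
          rw [List.getElem_take]
          congr 1
          rw [List.length_take]
          omega
        have hqh : ((P.drop j).reverse).head? = some b := by
          rw [List.head?_reverse]
          rw [← List.take_append_drop j P] at hlast
          rwa [getLast?_append_ne hdne] at hlast
        rw [hpl] at hp'
        rw [hqh] at hq'
        simp only [Option.mem_def, Option.some.injEq] at hp' hq'
        subst hp' hq'
        exact hadj
    · -- closing edge
      intro p hp' q hq'
      have hCl : C.getLast? = some w := by
        rw [hC, getLast?_append_ne (by simpa using hdne), List.getLast?_reverse,
          List.head?_drop]
        simp only [List.getElem?_eq_getElem hjn, Option.some.injEq]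
        exact hgw
      have hCh : C.head? = some a := by
        have h1 : (P.take j).head? = some a := by
          obtain ⟨j', hj'⟩ : ∃ j', j = j' + 1 := ⟨j - 1, by omega⟩
          rw [hj']
          cases P with
          | nil => simp at hPne
          | cons p0 t =>
            simp only [List.take_succ_cons, List.head?_cons]
            simpa using hhead
        rw [hC, List.head?_append, h1]
        rfl
      rw [hCl] at hp'
      rw [hCh] at hq'
      simp only [Option.mem_def, Option.some.injEq] at hp' hq'
      subst hp' hq'
      exact hw.symm
  -- injectivity
  have hinj : Set.InjOn f (H.neighborFinset a : Set V) := by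
    intro w1 h1 w2 h2 heq
    rw [hfval w1 h1, hfval w2 h2] at heq
    obtain ⟨h11, h12⟩ := hidx w1 h1
    obtain ⟨h21, h22⟩ := hidx w2 h2
    rw [hnd.getElem_inj_iff] at heq
    have : P.idxOf w1 = P.idxOf w2 := by omega
    rw [← List.getElem_idxOf h12, ← List.getElem_idxOf h22]
    congr 1
  have hfnb : ∀ w ∈ H.neighborFinset a, f w ≠ b := by
    intro w hw heq
    obtain ⟨h1, h2⟩ := hidx w hw
    rw [hfval w hw, ← hb] at heq
    rw [hnd.getElem_inj_iff] at heq
    omega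
  refine ⟨(H.neighborFinset a).image f, ?_, ?_⟩
  · rw [Finset.card_image_of_injOn hinj]
    rfl
  · intro x hx
    rw [Finset.mem_image] at hx
    obtain ⟨w, hw, rfl⟩ := hx
    exact ⟨hcross w hw, hfnb w hw⟩

lemma degree_mono (G H : SimpleGraph V) [DecidableRel G.Adj] [DecidableRel H.Adj]
    (h : G ≤ H) (x : V) : G.degree x ≤ H.degree x := by
  apply Finset.card_le_card
  intro y hy
  rw [SimpleGraph.mem_neighborFinset] at *
  exact h hy

end PosaAux

/-- Pósa's theorem: let `G` be a finite simple graph on `p ≥ 3`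
vertices such that for every `j` with `1 ≤ j < p/2`, the number of vertices of
degree at most `j` is less than `j`. Then `G` is Hamiltonian. -/
theorem posa_hamiltonian {V : Type*} [Fintype V] [DecidableEq V]
    (G : SimpleGraph V) [DecidableRel G.Adj] (hp : 3 ≤ Fintype.card V)
    (hdeg : ∀ j : ℕ, 1 ≤ j → 2 * j < Fintype.card V →
      (Finset.univ.filter fun x : V => G.degree x ≤ j).card < j) :
    G.IsHamiltonian := by
  by_contra hG
  -- every vertex of G has degree ≥ 2
  have hmindeg : ∀ x : V, 2 ≤ G.degree x := by
    intro x
    by_contra hx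
    have h1 := hdeg 1 le_rfl (by omega)
    have : x ∈ Finset.univ.filter fun x : V => G.degree x ≤ 1 := by
      simp only [Finset.mem_filter, Finset.mem_univ, true_and]; omega
    have := Finset.card_pos.2 ⟨x, this⟩
    omega
  -- a maximal non-Hamiltonian supergraph
  obtain ⟨H, ⟨hGH, hHnot⟩, hmax⟩ :=
    Set.Finite.exists_maximalFor id {H' : SimpleGraph V | G ≤ H' ∧ ¬ H'.IsHamiltonian}
      (Set.toFinite _) ⟨G, le_refl G, hG⟩
  simp only [id_eq] at hmax
  classical
  -- key claim for a maximal pair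
  have key : ∀ u v : V, u ≠ v → ¬ H.Adj u v → H.degree u ≤ H.degree v →
      (∀ x y : V, x ≠ y → ¬ H.Adj x y → H.degree x + H.degree y ≤ H.degree u + H.degree v) →
      False := by
    intro u v huv hnadj hle hmaxpair
    -- H ⊔ edge u v is Hamiltonian
    have hlt : H ≠ H ⊔ SimpleGraph.edge u v := by
      intro h
      apply hnadj
      have : (H ⊔ SimpleGraph.edge u v).Adj u v := by
        rw [SimpleGraph.sup_adj, SimpleGraph.edge_adj]
        tauto
      rwa [← h] at this
    have hH' : (H ⊔ SimpleGraph.edge u v).IsHamiltonian := by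
      by_contra hno
      exact hlt (le_antisymm le_sup_left (hmax ⟨le_trans hGH le_sup_left, hno⟩ le_sup_left))
    obtain ⟨P, x, y, hxy, hndP, hallP, hchP, hheadP, hlastP⟩ :=
      surgery H hp huv hnadj hHnot hH'
    -- orient the path from u to v
    obtain ⟨Q, hndQ, hallQ, hchQ, hheadQ, hlastQ⟩ :
        ∃ Q : List V, Q.Nodup ∧ (∀ w, w ∈ Q) ∧ Chain' H.Adj Q ∧
          Q.head? = some u ∧ Q.getLast? = some v := by
      rcases hxy with ⟨rfl, rfl⟩ | ⟨rfl, rfl⟩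
      · -- x = u (last), y = v (head) : reverse
        refine ⟨P.reverse, (List.nodup_reverse.2 hndP), fun w => by simpa using hallP w, ?_, ?_, ?_⟩
        · refine List.isChain_reverse.2 ?_; change List.IsChain (flip H.Adj) P
          have hflip : (flip H.Adj) = H.Adj := by
            ext p q; exact ⟨fun h => h.symm, fun h => h.symm⟩
          rwa [hflip]
        · rwa [List.head?_reverse]
        · rwa [List.getLast?_reverse]
      · exact ⟨P, hndP, hallP, hchP, hheadP, hlastP⟩
    obtain ⟨A, hAcard, hAprop⟩ :=
      path_bound H hp hHnot Q u v hndQ hallQ hchQ hheadQ hlastQ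
    -- degree sum bound
    have hsub : A ⊆ Finset.univ \ insert v (H.neighborFinset v) := by
      intro x hx
      obtain ⟨h1, h2⟩ := hAprop x hx
      simp only [Finset.mem_sdiff, Finset.mem_univ, true_and, Finset.mem_insert,
        SimpleGraph.mem_neighborFinset]
      push_neg
      exact ⟨h2, fun h => h1 h.symm⟩
    have hinsert : (insert v (H.neighborFinset v)).card = H.degree v + 1 := by
      rw [Finset.card_insert_of_notMem (by simp)]
      rfl
    have hcard1 : A.card ≤ Fintype.card V - (H.degree v + 1) := by
      have := Finset.card_le_card hsub
      rwa [Finset.card_sdiff_of_subset (Finset.subset_univ _), hinsert, Finset.card_univ] at this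
    have hcard2 : H.degree v + 1 ≤ Fintype.card V := by
      rw [← hinsert, ← Finset.card_univ]
      exact Finset.card_le_card (Finset.subset_univ _)
    rw [hAcard] at hcard1
    set k := H.degree u with hk
    have hk1 : 1 ≤ k := by
      have := degree_mono G H hGH u
      have := hmindeg u
      omega
    have hk2 : 2 * k < Fintype.card V := by omega
    -- every element of A has small degree
    have hsub2 : A ⊆ Finset.univ.filter fun x : V => G.degree x ≤ k := by
      intro x hx
      obtain ⟨h1, h2⟩ := hAprop x hx
      simp only [Finset.mem_filter, Finset.mem_univ, true_and]
      have hxmax := hmaxpair x v h2 h1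
      have := degree_mono G H hGH x
      omega
    have := Finset.card_le_card hsub2
    rw [hAcard] at this
    have := hdeg k hk1 hk2
    omega
  -- pick a maximal nonadjacent pair
  by_cases hcompl : ∀ x y : V, x ≠ y → H.Adj x y
  · -- H is complete, hence Hamiltonian
    apply hHnot
    set l := (Finset.univ : Finset V).toList with hl
    have hndl : l.Nodup := Finset.nodup_toList _
    have halll : ∀ x, x ∈ l := fun x => by simp [hl]
    have hlenl : l.length = Fintype.card V := Finset.length_toList _
    have hlne : l ≠ [] := by intro h; rw [h] at hlenl; simp at hlenl; omega
    apply isHamiltonian_of_list H hp l hndl halll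
    · exact (List.Pairwise.isChain (by
        refine hndl.imp ?_
        intro a b hab
        exact hcompl a b hab))
    · intro x hx y hy
      rw [List.getLast?_eq_getLast hlne] at hx
      rw [List.head?_eq_head hlne] at hy
      simp only [Option.mem_def, Option.some.injEq] at hx hy
      subst hx hy
      apply hcompl
      rw [List.getLast_eq_getElem, ← List.getElem_zero (by omega)]
      intro h
      rw [hndl.getElem_inj_iff] at h
      omega
  · push_neg at hcompl
    obtain ⟨u₀, v₀, hne₀, hnadj₀⟩ := hcompl
    set PF := Finset.univ.filter (fun p : V × V => p.1 ≠ p.2 ∧ ¬ H.Adj p.1 p.2) with hPF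
    have hPFne : PF.Nonempty := ⟨(u₀, v₀), by simp [hPF, hne₀, hnadj₀]⟩
    obtain ⟨p, hpmem, hpmax⟩ :=
      Finset.exists_max_image PF (fun p => H.degree p.1 + H.degree p.2) hPFne
    simp only [hPF, Finset.mem_filter, Finset.mem_univ, true_and] at hpmem
    obtain ⟨hpne, hpnadj⟩ := hpmem
    have hpmax' : ∀ x y : V, x ≠ y → ¬ H.Adj x y →
        H.degree x + H.degree y ≤ H.degree p.1 + H.degree p.2 := by
      intro x y h1 h2
      exact hpmax (x, y) (by simp [hPF, h1, h2])
    rcases le_total (H.degree p.1) (H.degree p.2) with hle | hle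
    · exact key p.1 p.2 hpne hpnadj hle hpmax'
    · refine key p.2 p.1 hpne.symm (fun h => hpnadj h.symm) hle ?_
      intro x y h1 h2
      have := hpmax' x y h1 h2
      omega
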